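/- Let (γ,ν): (I,t₀) → ℝ² × S¹ be a Legendre curve with γ(t)=(x(t),z(t)), ν(t)=(cos φ(t), sin φ(t)) and curvature (φ̇,β), and suppose x(t₀) > 0. Let J(t) = −β(t)x(t) and K(t) = −φ̇(t)cos φ(t). Then sin φ(t) = sin φ(t₀) − ∫_{t₀}^{t} K(s) ds, (d/dt)(x(t)²) = 2J(t)sin φ(t), so x(t) = (x(t₀)² + 2∫_{t₀}^{t} J(s)sin φ(s) ds)^{1/2} near t₀, and z(t) = z(t₀) − ∫_{t₀}^{t} (J(s)/x(s))cos φ(s) ds, with cos φ(t)² = 1 − (sin φ(t))². -/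

import Mathlib

open Real

/-- Let `(γ, ν)` be a Legendre curve with `γ = (x, z)`,
`ν = (cos φ, sin φ)`, curvature `(φ̇, β)`, and `x t₀ > 0`.  With `J = -βx` and
`K = -φ̇ cos φ`, one has `sin φ(t) = sin φ(t₀) - ∫_{t₀}^t K`, `(x²)' = 2J sin φ`, hence
`x(t) = √(x(t₀)² + 2∫_{t₀}^t J sin φ)` near `t₀`, and
`z(t) = z(t₀) - ∫_{t₀}^t (J/x) cos φ` near `t₀`, with `cos²φ = 1 - sin²φ`. -/
theorem profile_curve_from_given_J_and_K
    (x z φ β J K : ℝ → ℝ) (t₀ : ℝ)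
    (hx : ContDiff ℝ (⊤ : ℕ∞) x) (hz : ContDiff ℝ (⊤ : ℕ∞) z)
    (hφ : ContDiff ℝ (⊤ : ℕ∞) φ) (hβ : ContDiff ℝ (⊤ : ℕ∞) β)
    (hdx : ∀ t, deriv x t = -(β t) * sin (φ t))
    (hdz : ∀ t, deriv z t = β t * cos (φ t))
    (hJ : ∀ t, J t = -(β t) * x t)
    (hK : ∀ t, K t = -(deriv φ t) * cos (φ t))
    (hx0 : x t₀ > 0) :
    (∀ t : ℝ, sin (φ t) = sin (φ t₀) - ∫ s in t₀..t, K s) ∧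
    (∀ t : ℝ, deriv (fun s => x s ^ 2) t = 2 * J t * sin (φ t)) ∧
    (∀ᶠ t in nhds t₀,
      x t = Real.sqrt (x t₀ ^ 2 + 2 * ∫ s in t₀..t, J s * sin (φ s))) ∧
    (∀ᶠ t in nhds t₀,
      z t = z t₀ - ∫ s in t₀..t, (J s / x s) * cos (φ s)) ∧
    (∀ t : ℝ, cos (φ t) ^ 2 = 1 - sin (φ t) ^ 2) := by
  have hφd : Differentiable ℝ φ := hφ.differentiable (by simp)
  have hxd : Differentiable ℝ x := hx.differentiable (by simp)
  have hzd : Differentiable ℝ z := hz.differentiable (by simp)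
  have hφ' : Continuous (deriv φ) := hφ.continuous_deriv (mod_cast le_top)
  have hβc : Continuous β := hβ.continuous
  have hxc : Continuous x := hx.continuous
  -- continuity of K, J etc.
  have hKc : Continuous K := by
    have : Continuous fun t => -(deriv φ t) * cos (φ t) :=
      (hφ'.neg).mul (Real.continuous_cos.comp hφ.continuous)
    simpa [funext hK] using this
  have hJc : Continuous J := by
    have : Continuous fun t => -(β t) * x t := (hβc.neg).mul hxc
    simpa [funext hJ] using this
  -- part 1
  have h1 : ∀ t : ℝ, sin (φ t) = sin (φ t₀) - ∫ s in t₀..t, K s := by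
    intro t
    have hds : ∀ s ∈ Set.uIcc t₀ t,
        HasDerivAt (fun u => sin (φ u)) (-(K s)) s := by
      intro s _
      have := ((hφd s).hasDerivAt).sin
      simpa [hK, mul_comm] using this
    have hint : IntervalIntegrable (fun s => -(K s)) MeasureTheory.volume t₀ t :=
      (hKc.neg).intervalIntegrable _ _
    have := intervalIntegral.integral_eq_sub_of_hasDerivAt hds hint
    rw [intervalIntegral.integral_neg] at this
    linarith
  -- part 2
  have h2 : ∀ t : ℝ, deriv (fun s => x s ^ 2) t = 2 * J t * sin (φ t) := by
    intro t
    have hd : HasDerivAt (fun s => x s ^ 2)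
        ((2 : ℕ) * x t ^ 1 * deriv x t) t := ((hxd t).hasDerivAt).pow 2
    rw [hd.deriv, hdx, hJ]
    ring
  -- neighborhood where x > 0
  have hev : ∀ᶠ t in nhds t₀, 0 < x t :=
    hxc.continuousAt.eventually (eventually_nhds_iff.mpr
      ⟨Set.Ioi 0, fun _ h => h, isOpen_Ioi, hx0⟩)
  obtain ⟨ε, hε, hball⟩ := Metric.eventually_nhds_iff.mp hev
  have hsub : ∀ t, dist t t₀ < ε → ∀ s ∈ Set.uIcc t₀ t, 0 < x s := by
    intro t ht s hs
    apply hball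
    rw [Real.dist_eq] at *
    rcases Set.mem_uIcc.mp hs with h | h <;> rw [abs_sub_lt_iff] <;>
      constructor <;> nlinarith [abs_sub_lt_iff.mp ht]
  -- integral formula for x^2
  have hx2 : ∀ t : ℝ, x t ^ 2 = x t₀ ^ 2 + 2 * ∫ s in t₀..t, J s * sin (φ s) := by
    intro t
    have hds : ∀ s ∈ Set.uIcc t₀ t,
        HasDerivAt (fun u => x u ^ 2) (2 * J s * sin (φ s)) s := by
      intro s _
      have hd : HasDerivAt (fun u => x u ^ 2)
          ((2 : ℕ) * x s ^ 1 * deriv x s) s := ((hxd s).hasDerivAt).pow 2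
      convert hd using 1
      rw [hdx, hJ]; ring
    have hint : IntervalIntegrable (fun s => 2 * J s * sin (φ s))
        MeasureTheory.volume t₀ t :=
      ((continuous_const.mul hJc).mul
        (Real.continuous_sin.comp hφ.continuous)).intervalIntegrable _ _
    have := intervalIntegral.integral_eq_sub_of_hasDerivAt hds hint
    have hpull : (∫ s in t₀..t, 2 * J s * sin (φ s))
        = 2 * ∫ s in t₀..t, J s * sin (φ s) := by
      rw [← intervalIntegral.integral_const_mul]
      simp [mul_assoc]
    rw [hpull] at this
    linarith
  -- part 3
  have h3 : ∀ᶠ t in nhds t₀,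
      x t = Real.sqrt (x t₀ ^ 2 + 2 * ∫ s in t₀..t, J s * sin (φ s)) := by
    filter_upwards [hev] with t ht
    rw [← hx2 t, Real.sqrt_sq ht.le]
  -- part 4
  have h4 : ∀ᶠ t in nhds t₀,
      z t = z t₀ - ∫ s in t₀..t, (J s / x s) * cos (φ s) := by
    rw [Metric.eventually_nhds_iff]
    refine ⟨ε, hε, fun t ht => ?_⟩
    have hzint : ∀ s ∈ Set.uIcc t₀ t,
        HasDerivAt z (β s * cos (φ s)) s := by
      intro s _
      have := (hzd s).hasDerivAt
      rwa [hdz s] at this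
    have hint : IntervalIntegrable (fun s => β s * cos (φ s))
        MeasureTheory.volume t₀ t :=
      (hβc.mul (Real.continuous_cos.comp hφ.continuous)).intervalIntegrable _ _
    have key := intervalIntegral.integral_eq_sub_of_hasDerivAt hzint hint
    have heq : (∫ s in t₀..t, (J s / x s) * cos (φ s))
        = ∫ s in t₀..t, -(β s * cos (φ s)) := by
      apply intervalIntegral.integral_congr
      intro s hs
      have hxs : x s ≠ 0 := (hsub t ht s hs).ne'
      show J s / x s * cos (φ s) = -(β s * cos (φ s))
      rw [hJ]
      field_simp
    rw [heq, intervalIntegral.integral_neg, key]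
    ring
  exact ⟨h1, h2, h3, h4, fun t => by
    have := Real.sin_sq_add_cos_sq (φ t); linarith⟩
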